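/- Let k ≥ 2 be an integer and B > 0, y > 0 reals. For the density p(x) = (k−1)/B on [0, B/(k−1)], if y ≤ B/(k−1) then ∫₀^y (kx + B)·p(x) dx + (k−1)·∫_y^{B/(k−1)} y·p(x) dx ≤ 2·(k−1)·y; i.e., the uniform strategy on [0, B/(k−1)] is 2-competitive for the requestor-wins problem with conflict chains of size k. -/

import Mathlib

theorem stmt_13 (k : ℕ) (hk : 2 ≤ k) (B y : ℝ) (hB : 0 < B) (hy : 0 < y)
    (hyB : y ≤ B / ((k : ℝ) - 1)) :
    (∫ x in (0 : ℝ)..y, ((k : ℝ) * x + B) * (((k : ℝ) - 1) / B)) +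
      ((k : ℝ) - 1) * ∫ x in y..(B / ((k : ℝ) - 1)), y * (((k : ℝ) - 1) / B) ≤
    2 * ((k : ℝ) - 1) * y := by
  have hk1 : (1 : ℝ) ≤ (k : ℝ) - 1 := by
    have : (2 : ℝ) ≤ (k : ℝ) := by exact_mod_cast hk
    linarith
  have hI1 : (∫ x in (0 : ℝ)..y, ((k : ℝ) * x + B) * (((k : ℝ) - 1) / B))
      = ((k : ℝ) * (y ^ 2 / 2) + B * y) * (((k : ℝ) - 1) / B) := by
    rw [intervalIntegral.integral_mul_const]
    congr 1
    rw [intervalIntegral.integral_add (by apply Continuous.intervalIntegrable; continuity) (intervalIntegrable_const),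
      intervalIntegral.integral_const_mul, integral_id, intervalIntegral.integral_const]
    simp [smul_eq_mul]; ring
  have hI2 : (∫ x in y..(B / ((k : ℝ) - 1)), y * (((k : ℝ) - 1) / B))
      = (B / ((k : ℝ) - 1) - y) * (y * (((k : ℝ) - 1) / B)) := by
    rw [intervalIntegral.integral_const, smul_eq_mul]
  rw [hI1, hI2]
  have h1 : ((k : ℝ) - 1) * (B / ((k : ℝ) - 1)) = B := by field_simp
  have hmul : ((k : ℝ) - 1) * y ≤ B := by
    calc ((k : ℝ) - 1) * y ≤ ((k : ℝ) - 1) * (B / ((k : ℝ) - 1)) := by nlinarith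
      _ = B := h1
  have hB' : B ≠ 0 := ne_of_gt hB
  field_simp
  nlinarith [mul_nonneg (mul_nonneg (sq_nonneg ((k:ℝ)-1)) hB.le)
    (mul_nonneg (sq_nonneg y) (by linarith : (0:ℝ) ≤ (k:ℝ)-2))]
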